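/- Let f(z) = λe^z with λ ≠ 0 and t > 1/2. Then the spherical transfer operator applied to the constant function 1 satisfies L_t 1(w) → +∞ as |w| → ∞. In particular, L_t is not a bounded operator on bounded continuous functions. More precisely, for large |w|, L_t 1(w) ≍ |w|^t · (1 + (log|w/λ|)²)^{1/2 - t}. -/

import Mathlib

open Filter
section StmtAux
open Real

/-- Bernoulli-type step inequality. -/
lemma bern_step (p : ℝ) (hp : 0 < p) (n : ℕ) (hn : 1 ≤ n) :
    p * ((n : ℝ) + 1) ^ (-(p + 1)) ≤ (n : ℝ) ^ (-p) - ((n : ℝ) + 1) ^ (-p) := by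
  have hn0 : (0:ℝ) < n := by exact_mod_cast hn
  have hn1 : (0:ℝ) < (n:ℝ) + 1 := by linarith
  set q : ℝ := p + 1 with hq
  have hq1 : (1:ℝ) ≤ q := by simp [hq]; linarith
  have h3 : ((n:ℝ) + 1) = n * (1 + 1/n) := by field_simp
  have h5 : 1 + q * (1/(n:ℝ)) ≤ (1 + 1/(n:ℝ)) ^ q := by
    apply one_add_mul_self_le_rpow_one_add _ hq1
    have : (0:ℝ) ≤ 1/(n:ℝ) := by positivity
    linarith
  have h4 : ((n:ℝ) + 1) ^ q = (n:ℝ) ^ q * (1 + 1/(n:ℝ)) ^ q := by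
    rw [h3, Real.mul_rpow hn0.le (by positivity)]
  have h6 : (n:ℝ) ^ q * (n:ℝ) ^ (-p) = n := by
    rw [← Real.rpow_add hn0]
    norm_num [hq]
  have hA : (n:ℝ) + 1 + p ≤ ((n:ℝ) + 1) ^ q * (n:ℝ) ^ (-p) := by
    have hnp : (0:ℝ) < (n:ℝ) ^ (-p) := Real.rpow_pos_of_pos hn0 _
    have hnq : (0:ℝ) < (n:ℝ) ^ q := Real.rpow_pos_of_pos hn0 _
    calc (n:ℝ) + 1 + p = (n:ℝ) * (1 + q * (1/(n:ℝ))) := by field_simp [hq]; ring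
    _ ≤ (n:ℝ) * (1 + 1/(n:ℝ)) ^ q := by
        apply mul_le_mul_of_nonneg_left h5 hn0.le
    _ = ((n:ℝ) ^ q * (n:ℝ) ^ (-p)) * (1 + 1/(n:ℝ)) ^ q := by rw [h6]
    _ = ((n:ℝ) + 1) ^ q * (n:ℝ) ^ (-p) := by rw [h4]; ring
  have e1 : (n:ℝ) ^ (-p) = ((n:ℝ)+1) ^ (-q) * (((n:ℝ)+1) ^ q * (n:ℝ) ^ (-p)) := by
    rw [← mul_assoc, ← Real.rpow_add hn1]
    norm_num
  have e2 : ((n:ℝ)+1) ^ (-p) = ((n:ℝ)+1) ^ (-q) * ((n:ℝ)+1) := by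
    nth_rewrite 1 [show -p = -q + 1 by rw [hq]; ring]
    rw [Real.rpow_add hn1, Real.rpow_one]
  have hpos : (0:ℝ) < ((n:ℝ)+1) ^ (-q) := Real.rpow_pos_of_pos hn1 _
  have harg : -(p+1) = -q := by rw [hq]
  calc p * ((n:ℝ)+1) ^ (-(p+1)) = ((n:ℝ)+1) ^ (-q) * (((n:ℝ)+1+p) - ((n:ℝ)+1)) := by
        rw [harg]; ring
  _ ≤ ((n:ℝ)+1) ^ (-q) * ((((n:ℝ)+1) ^ q * (n:ℝ) ^ (-p)) - ((n:ℝ)+1)) := by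
        apply mul_le_mul_of_nonneg_left _ hpos.le
        linarith
  _ = (n:ℝ) ^ (-p) - ((n:ℝ)+1) ^ (-p) := by
        rw [e2]; nth_rewrite 2 [e1]; ring

/-- Telescoping tail estimate: `∑_{i≥0} (m+1+i)^{-(p+1)} ≤ m^{-p}/p`. -/
lemma tail_bound (p : ℝ) (hp : 0 < p) (m : ℕ) (hm : 1 ≤ m) :
    (Summable fun i : ℕ => ((m : ℝ) + 1 + i) ^ (-(p + 1))) ∧
    ∑' i : ℕ, ((m : ℝ) + 1 + i) ^ (-(p + 1)) ≤ (m : ℝ) ^ (-p) / p := by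
  have hnonneg : ∀ i : ℕ, 0 ≤ ((m:ℝ)+1+i) ^ (-(p+1)) := fun i =>
    Real.rpow_nonneg (by positivity) _
  have hsum : ∀ N, ∑ i ∈ Finset.range N, ((m:ℝ)+1+i) ^ (-(p+1)) ≤ (m:ℝ)^(-p)/p := by
    intro N
    rw [le_div_iff₀ hp, mul_comm]
    have key : ∀ i ∈ Finset.range N,
        p * ((m:ℝ)+1+i) ^ (-(p+1)) ≤
          ((m:ℝ)+i) ^ (-p) - ((m:ℝ)+(i+1)) ^ (-p) := by
      intro i _
      have := bern_step p hp (m+i) (le_trans hm (Nat.le_add_right m i))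
      push_cast at this
      rw [show (m:ℝ)+1+(i:ℝ) = (m:ℝ)+(i:ℝ)+1 by ring]
      rw [show (m:ℝ)+((i:ℝ)+1) = (m:ℝ)+(i:ℝ)+1 by ring]
      exact this
    calc p * ∑ i ∈ Finset.range N, ((m:ℝ)+1+i) ^ (-(p+1))
        = ∑ i ∈ Finset.range N, p * ((m:ℝ)+1+i) ^ (-(p+1)) := Finset.mul_sum _ _ _
      _ ≤ ∑ i ∈ Finset.range N, (((m:ℝ)+i) ^ (-p) - ((m:ℝ)+(i+1)) ^ (-p)) :=
          Finset.sum_le_sum key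
      _ = ((m:ℝ)+(0:ℕ)) ^ (-p) - ((m:ℝ)+(N:ℕ)) ^ (-p) := by
          rw [← Finset.sum_range_sub' (fun i : ℕ => ((m:ℝ)+i) ^ (-p)) N]
          apply Finset.sum_congr rfl
          intro i _
          push_cast
          ring_nf
      _ ≤ (m:ℝ) ^ (-p) := by
          have h1 : (0:ℝ) ≤ ((m:ℝ)+(N:ℕ)) ^ (-p) := Real.rpow_nonneg (by positivity) _
          simp only [Nat.cast_zero, add_zero]
          linarith
  exact ⟨summable_of_sum_range_le hnonneg hsum, Real.tsum_le_of_sum_range_le hnonneg hsum⟩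

/-- Upper bound for the one-sided sum. -/
lemma nat_sum_bound (t : ℝ) (ht : 1/2 < t) (A : ℝ) (hA : 1 ≤ A) :
    Summable (fun n : ℕ => (A + π^2 * (n:ℝ)^2) ^ (-t)) ∧
    ∑' n : ℕ, (A + π^2 * (n:ℝ)^2) ^ (-t) ≤ (3 + 1/(2*t-1)) * A ^ (1/2 - t) := by
  have hA0 : (0:ℝ) < A := by linarith
  have ht0 : (0:ℝ) < t := by linarith
  set p : ℝ := 2*t - 1 with hpdef
  have hp : 0 < p := by simp [hpdef]; linarith
  set s : ℝ := A ^ ((1:ℝ)/2) with hsdef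
  have hs0 : 0 < s := Real.rpow_pos_of_pos hA0 _
  have hs1 : 1 ≤ s := by
    have := Real.rpow_le_rpow (by norm_num) hA (by norm_num : (0:ℝ) ≤ 1/2)
    simpa [hsdef] using this
  set m : ℕ := ⌈s⌉₊ with hmdef
  have hm1 : 1 ≤ m := Nat.one_le_ceil_iff.mpr hs0
  have hsm : s ≤ (m:ℝ) := Nat.le_ceil s
  have hm3 : (m:ℝ) + 1 ≤ 3 * s := by
    have := Nat.ceil_lt_add_one hs0.le
    rw [← hmdef] at this
    linarith
  have hsA : s * A ^ (-t) = A ^ (1/2 - t) := by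
    rw [hsdef, ← Real.rpow_add hA0, sub_eq_add_neg]
  have hsp : s ^ (-p) = A ^ (1/2 - t) := by
    rw [hsdef, ← Real.rpow_mul hA0.le]
    congr 1
    rw [hpdef]; ring
  have hpi1 : (1:ℝ) ≤ π^2 := by nlinarith [Real.pi_gt_three]
  have hterm_nonneg : ∀ n : ℕ, 0 ≤ (A + π^2 * (n:ℝ)^2) ^ (-t) := fun n =>
    Real.rpow_nonneg (by positivity) _
  have hhead : ∀ n : ℕ, (A + π^2 * (n:ℝ)^2) ^ (-t) ≤ A ^ (-t) := by
    intro n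
    apply Real.rpow_le_rpow_of_nonpos hA0 (le_add_of_nonneg_right (by positivity))
    linarith
  have htail : ∀ i : ℕ, (A + π^2 * (((i:ℝ) + ((m:ℝ)+1)))^2) ^ (-t) ≤ ((m:ℝ)+1+i) ^ (-(p+1)) := by
    intro i
    have hx0 : (0:ℝ) < (i:ℝ) + ((m:ℝ)+1) := by positivity
    have h1 : ((i:ℝ) + ((m:ℝ)+1))^2 ≤ A + π^2 * ((i:ℝ) + ((m:ℝ)+1))^2 := by
      nlinarith [sq_nonneg ((i:ℝ) + ((m:ℝ)+1))]
    have h2 : (A + π^2 * (((i:ℝ) + ((m:ℝ)+1)))^2) ^ (-t) ≤ ((((i:ℝ) + ((m:ℝ)+1)))^2) ^ (-t) :=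
      Real.rpow_le_rpow_of_nonpos (by positivity) h1 (by linarith)
    have h3 : ((((i:ℝ) + ((m:ℝ)+1)))^2) ^ (-t) = ((i:ℝ) + ((m:ℝ)+1)) ^ (-(p+1)) := by
      rw [← Real.rpow_natCast ((i:ℝ) + ((m:ℝ)+1)) 2, ← Real.rpow_mul hx0.le]
      congr 1
      rw [hpdef]; push_cast; ring
    rw [show (m:ℝ)+1+(i:ℝ) = (i:ℝ) + ((m:ℝ)+1) by ring]
    exact h2.trans_eq h3
  obtain ⟨htsummable, htbound⟩ := tail_bound p hp m hm1
  have hshift : ∀ i : ℕ, (fun n : ℕ => (A + π^2 * (n:ℝ)^2) ^ (-t)) (i + (m+1)) ≤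
      ((m:ℝ)+1+i) ^ (-(p+1)) := by
    intro i
    have := htail i
    simpa [Nat.cast_add, Nat.cast_one] using this
  have hsumm_shift : Summable (fun i : ℕ => (fun n : ℕ => (A + π^2 * (n:ℝ)^2) ^ (-t)) (i + (m+1))) :=
    Summable.of_nonneg_of_le (fun i => hterm_nonneg _) hshift htsummable
  have hf : Summable (fun n : ℕ => (A + π^2 * (n:ℝ)^2) ^ (-t)) :=
    (summable_nat_add_iff (m+1)).mp hsumm_shift
  refine ⟨hf, ?_⟩
  rw [← Summable.sum_add_tsum_nat_add (m+1) hf]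
  have hheadsum : ∑ i ∈ Finset.range (m+1), (A + π^2 * (i:ℝ)^2) ^ (-t) ≤ 3 * A ^ (1/2 - t) := by
    calc ∑ i ∈ Finset.range (m+1), (A + π^2 * (i:ℝ)^2) ^ (-t)
        ≤ ((m:ℝ)+1) * A ^ (-t) := by
          have h := Finset.sum_le_card_nsmul (Finset.range (m+1))
            (fun i : ℕ => (A + π^2 * (i:ℝ)^2) ^ (-t)) (A ^ (-t)) (fun i _ => hhead i)
          rw [Finset.card_range, nsmul_eq_mul] at h
          push_cast at h ⊢
          linarith
      _ ≤ (3*s) * A ^ (-t) := by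
          apply mul_le_mul_of_nonneg_right hm3 (Real.rpow_nonneg hA0.le _)
      _ = 3 * A ^ (1/2 - t) := by rw [mul_assoc, hsA]
  have htailsum : ∑' i : ℕ, (A + π^2 * ((i + (m+1) : ℕ):ℝ)^2) ^ (-t) ≤ (1/(2*t-1)) * A ^ (1/2 - t) := by
    have h1 : ∑' i : ℕ, (A + π^2 * ((i + (m+1) : ℕ):ℝ)^2) ^ (-t) ≤
        ∑' i : ℕ, ((m:ℝ)+1+i) ^ (-(p+1)) :=
      Summable.tsum_le_tsum hshift hsumm_shift htsummable
    have h3 : (m:ℝ) ^ (-p) ≤ s ^ (-p) :=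
      Real.rpow_le_rpow_of_nonpos hs0 hsm (by linarith)
    calc ∑' i : ℕ, (A + π^2 * ((i + (m+1) : ℕ):ℝ)^2) ^ (-t)
        ≤ (m:ℝ) ^ (-p) / p := h1.trans htbound
      _ ≤ s ^ (-p) / p := by gcongr
      _ = (1/(2*t-1)) * A ^ (1/2 - t) := by
          rw [hsp, hpdef]; ring
  linarith [htailsum, hheadsum]

set_option maxHeartbeats 1000000 in
/-- Two-sided estimate for the full lattice sum. -/
lemma int_sum_est (t : ℝ) (ht : 1/2 < t) :
    ∃ C : ℝ, 0 < C ∧ ∀ A y₀ : ℝ, 1 ≤ A → |y₀| ≤ π →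
      Summable (fun n : ℤ => (A + (y₀ + 2*π*n)^2) ^ (-t)) ∧
      C⁻¹ * A ^ (1/2 - t) ≤ ∑' n : ℤ, (A + (y₀ + 2*π*n)^2) ^ (-t) ∧
      ∑' n : ℤ, (A + (y₀ + 2*π*n)^2) ^ (-t) ≤ C * A ^ (1/2 - t) := by
  have hpi := Real.pi_pos
  have ht0 : (0:ℝ) < t := by linarith
  set B : ℝ := 1 + (1+π)^2 with hBdef
  have hB0 : 0 < B := by positivity
  have hBt0 : 0 < B ^ t := Real.rpow_pos_of_pos hB0 _
  have hCu0 : 0 < 3 + 1/(2*t-1) := by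
    have : 0 < 2*t-1 := by linarith
    positivity
  refine ⟨2*π*B^t + 2*(3 + 1/(2*t-1)), by positivity, ?_⟩
  intro A y₀ hA hy
  have hA0 : (0:ℝ) < A := by linarith
  set g : ℤ → ℝ := fun n => (A + (y₀ + 2*π*n)^2) ^ (-t) with hgdef
  have hgnn : ∀ n : ℤ, 0 ≤ g n := fun n => Real.rpow_nonneg (by positivity) _
  set G : ℤ → ℝ := fun n => (A + π^2*((n:ℤ):ℝ)^2) ^ (-t) with hGdef
  have hgG : ∀ n : ℤ, g n ≤ G n := by
    intro n
    have habs : π * |(n:ℝ)| ≤ |y₀ + 2*π*n| := by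
      rcases eq_or_ne n 0 with rfl | hn
      · simp [abs_nonneg]
      · have h1 : (1:ℝ) ≤ |(n:ℝ)| := by
          rw [← Int.cast_abs]
          exact_mod_cast Int.one_le_abs hn
        have h2 : |(2*π*(n:ℝ))| ≤ |y₀ + 2*π*n| + |y₀| := by
          calc |(2*π*(n:ℝ))| = |(y₀ + 2*π*n) - y₀| := by ring_nf
            _ ≤ |y₀ + 2*π*n| + |y₀| := abs_sub _ _
        have h3 : |(2*π*(n:ℝ))| = 2*π*|(n:ℝ)| := by
          rw [abs_mul, abs_of_pos (by positivity : (0:ℝ) < 2*π)]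
        nlinarith [abs_nonneg (n:ℝ)]
    have hsq : π^2*((n:ℤ):ℝ)^2 ≤ (y₀ + 2*π*n)^2 := by
      have := pow_le_pow_left₀ (by positivity) habs 2
      rw [sq_abs] at this
      calc π^2*((n:ℤ):ℝ)^2 = (π * |(n:ℝ)|)^2 := by rw [mul_pow, sq_abs]
        _ ≤ (y₀ + 2*π*n)^2 := this
    exact Real.rpow_le_rpow_of_nonpos (by positivity) (by linarith) (by linarith)
  obtain ⟨hNatSumm, hNatBound⟩ := nat_sum_bound t ht A hA
  have hGnat : Summable (fun n : ℕ => G n) := by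
    apply hNatSumm.congr
    intro n; simp [hGdef]
  have hGneg : Summable (fun n : ℕ => G (-n)) := by
    apply hNatSumm.congr
    intro n; simp [hGdef]
  have hGsumm : Summable G := Summable.of_nat_of_neg hGnat hGneg
  have hgsumm : Summable g := Summable.of_nonneg_of_le hgnn hgG hGsumm
  refine ⟨hgsumm, ?_, ?_⟩
  · -- lower bound
    set s : ℝ := A ^ ((1:ℝ)/2) with hsdef
    have hs0 : 0 < s := Real.rpow_pos_of_pos hA0 _
    have hs1 : 1 ≤ s := by
      have := Real.rpow_le_rpow (by norm_num) hA (by norm_num : (0:ℝ) ≤ 1/2)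
      simpa [hsdef] using this
    have hs2 : s^2 = A := by
      rw [hsdef, ← Real.rpow_natCast (A ^ ((1:ℝ)/2)) 2, ← Real.rpow_mul hA0.le]
      norm_num
    have hsA : s * A ^ (-t) = A ^ (1/2 - t) := by
      rw [hsdef, ← Real.rpow_add hA0, sub_eq_add_neg]
    set K : ℕ := ⌊s/(2*π)⌋₊ with hKdef
    have hK1 : 2*π*(K:ℝ) ≤ s := by
      have h := Nat.floor_le (by positivity : (0:ℝ) ≤ s/(2*π))
      rw [← hKdef] at h
      rw [← le_div_iff₀' (by positivity : (0:ℝ) < 2*π)]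
      exact h
    have hK2 : s/(2*π) < (K:ℝ) + 1 := by
      have := Nat.lt_floor_add_one (s/(2*π))
      exact_mod_cast this
    have hBA : ∀ n ∈ Finset.Icc (-(K:ℤ)) (K:ℤ), (B*A) ^ (-t) ≤ g n := by
      intro n hn
      rw [Finset.mem_Icc] at hn
      have hnabs : |(n:ℝ)| ≤ (K:ℝ) := by
        rw [← Int.cast_abs]
        have : |n| ≤ (K:ℤ) := abs_le.mpr hn
        exact_mod_cast this
      have h1 : |y₀ + 2*π*n| ≤ π + s := by
        have h2 : |2*π*(n:ℝ)| ≤ s := by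
          rw [abs_mul, abs_of_pos (by positivity : (0:ℝ) < 2*π)]
          nlinarith
        calc |y₀ + 2*π*n| ≤ |y₀| + |2*π*(n:ℝ)| := abs_add_le _ _
          _ ≤ π + s := add_le_add hy h2
      have h3 : (y₀ + 2*π*n)^2 ≤ (1+π)^2 * A := by
        have h4 : (y₀ + 2*π*n)^2 ≤ (π + s)^2 := by
          rw [← sq_abs (y₀ + 2*π*(n:ℝ))]
          apply pow_le_pow_left₀ (abs_nonneg _) h1
        have h7 : π + s ≤ (1+π)*s := by nlinarith
        have h5 : (π + s)^2 ≤ ((1+π)*s)^2 :=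
          pow_le_pow_left₀ (by positivity) h7 2
        have h6 : ((1+π)*s)^2 = (1+π)^2 * A := by rw [mul_pow, hs2]
        linarith
      apply Real.rpow_le_rpow_of_nonpos (by positivity)
      · rw [hBdef]; nlinarith
      · linarith
    have hcard : (Finset.Icc (-(K:ℤ)) (K:ℤ)).card = 2*K+1 := by
      rw [Int.card_Icc]; omega
    have hFsum : ((2*K+1 : ℕ) : ℝ) * (B*A) ^ (-t) ≤ ∑ n ∈ Finset.Icc (-(K:ℤ)) (K:ℤ), g n := by
      have := Finset.card_nsmul_le_sum (Finset.Icc (-(K:ℤ)) (K:ℤ)) g ((B*A) ^ (-t)) hBA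
      rwa [hcard, nsmul_eq_mul] at this
    have hFle : ∑ n ∈ Finset.Icc (-(K:ℤ)) (K:ℤ), g n ≤ ∑' n : ℤ, g n :=
      Summable.sum_le_tsum _ (fun n _ => hgnn n) hgsumm
    have hBA0 : (0:ℝ) < (B*A) ^ (-t) := Real.rpow_pos_of_pos (by positivity) _
    have hcount : s/(2*π) ≤ ((2*K+1 : ℕ) : ℝ) := by
      push_cast
      linarith
    have hmain : (2*π*B^t)⁻¹ * A ^ (1/2-t) ≤ ∑' n : ℤ, g n := by
      have e1 : (B*A) ^ (-t) = (B^t)⁻¹ * A^(-t) := by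
        rw [Real.mul_rpow hB0.le hA0.le, Real.rpow_neg hB0.le]
      have e2 : (2*π*B^t)⁻¹ * A ^ (1/2-t) = (s/(2*π)) * ((B^t)⁻¹ * A^(-t)) := by
        rw [← hsA]
        field_simp
        try ring
      rw [e2, ← e1]
      calc (s/(2*π)) * (B*A) ^ (-t) ≤ ((2*K+1 : ℕ) : ℝ) * (B*A) ^ (-t) :=
            mul_le_mul_of_nonneg_right hcount hBA0.le
        _ ≤ ∑' n : ℤ, g n := hFsum.trans hFle
    calc (2*π*B^t + 2*(3 + 1/(2*t-1)))⁻¹ * A ^ (1/2-t)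
        ≤ (2*π*B^t)⁻¹ * A ^ (1/2-t) := by
          apply mul_le_mul_of_nonneg_right _ (Real.rpow_nonneg hA0.le _)
          apply inv_anti₀ (by positivity)
          linarith
      _ ≤ ∑' n : ℤ, g n := hmain
  · -- upper bound
    have hG0 : 0 ≤ G 0 := Real.rpow_nonneg (by positivity) _
    have htsumG : ∑' n : ℤ, G n ≤ 2 * ((3 + 1/(2*t-1)) * A ^ (1/2 - t)) := by
      rw [Summable.tsum_of_nat_of_neg hGnat hGneg]
      have e1 : ∑' n : ℕ, G n = ∑' n : ℕ, (A + π^2*(n:ℝ)^2) ^ (-t) := by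
        apply tsum_congr; intro n; simp [hGdef]
      have e2 : ∑' n : ℕ, G (-n) = ∑' n : ℕ, (A + π^2*(n:ℝ)^2) ^ (-t) := by
        apply tsum_congr; intro n; simp [hGdef]
      rw [e1, e2]
      linarith
    calc ∑' n : ℤ, g n ≤ ∑' n : ℤ, G n := Summable.tsum_le_tsum hgG hgsumm hGsumm
      _ ≤ 2 * ((3 + 1/(2*t-1)) * A ^ (1/2 - t)) := htsumG
      _ = (2*(3 + 1/(2*t-1))) * A ^ (1/2 - t) := by ring
      _ ≤ (2*π*B^t + 2*(3 + 1/(2*t-1))) * A ^ (1/2 - t) := by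
          apply mul_le_mul_of_nonneg_right _ (Real.rpow_nonneg hA0.le _)
          nlinarith

/-- Reparametrize the sum over preimages of `λ·e^z = w` by `ℤ`. -/
lemma preimage_tsum (l : ℂ) (hl : l ≠ 0) (t : ℝ) (w : ℂ) (hw : w ≠ 0) :
    ∑' z : {z : ℂ // l * Complex.exp z = w}, (1 + ‖z.1‖ ^ 2) ^ (-t)
      = ∑' n : ℤ, ((1 + Real.log (‖w/l‖) ^ 2)
          + (Complex.arg (w/l) + 2*π*(n:ℝ))^2) ^ (-t) := by
  have hwl : w / l ≠ 0 := div_ne_zero hw hl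
  have hc : (2 * (π:ℂ) * Complex.I) ≠ 0 := by
    simp [Real.pi_ne_zero, Complex.I_ne_zero, Complex.ext_iff, Real.pi_ne_zero]
  set φ : ℤ → {z : ℂ // l * Complex.exp z = w} := fun n =>
    ⟨Complex.log (w/l) + n * (2 * (π:ℂ) * Complex.I), by
      rw [Complex.exp_add, Complex.exp_log hwl, Complex.exp_int_mul_two_pi_mul_I]
      field_simp⟩ with hφdef
  have hinj : Function.Injective φ := by
    intro m n h
    have h2 : Complex.log (w/l) + m * (2 * (π:ℂ) * Complex.I)
        = Complex.log (w/l) + n * (2 * (π:ℂ) * Complex.I) := congrArg Subtype.val h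
    have h3 : (m:ℂ) = n := mul_right_cancel₀ hc (by linear_combination h2)
    exact_mod_cast h3
  have hsurj : Function.Surjective φ := by
    rintro ⟨z, hz⟩
    have h1 : Complex.exp z = w / l := by
      rw [eq_div_iff hl, mul_comm]
      exact hz
    have h2 : Complex.exp z = Complex.exp (Complex.log (w/l)) := by
      rw [Complex.exp_log hwl, h1]
    obtain ⟨n, hn⟩ := Complex.exp_eq_exp_iff_exists_int.mp h2
    refine ⟨n, Subtype.ext ?_⟩
    show Complex.log (w/l) + n * (2 * (π:ℂ) * Complex.I) = z
    exact hn.symm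
  rw [← (Equiv.ofBijective φ ⟨hinj, hsurj⟩).tsum_eq
    (fun z : {z : ℂ // l * Complex.exp z = w} => (1 + ‖z.1‖ ^ 2) ^ (-t))]
  apply tsum_congr
  intro n
  have hre : (Complex.log (w/l) + n * (2 * (π:ℂ) * Complex.I)).re
      = Real.log (‖w/l‖) := by
    simp [Complex.add_re, Complex.log_re]
  have him : (Complex.log (w/l) + n * (2 * (π:ℂ) * Complex.I)).im
      = Complex.arg (w/l) + 2*π*(n:ℝ) := by
    simp [Complex.add_im, Complex.log_im]
    ring
  have habs : ‖(Complex.log (w/l) + n * (2 * (π:ℂ) * Complex.I))‖ ^ 2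
      = Real.log (‖w/l‖) ^ 2 + (Complex.arg (w/l) + 2*π*(n:ℝ))^2 := by
    rw [Complex.sq_norm, Complex.normSq_apply, hre, him]
    ring
  show (1 + ‖((φ n) : ℂ)‖ ^ 2) ^ (-t) = _
  rw [hφdef]
  simp only []
  rw [habs]
  ring_nf

lemma main_est (l : ℂ) (hl : l ≠ 0) (t : ℝ) (ht : (1/2:ℝ) < t) :
    ∃ C : ℝ, 0 < C ∧ ∀ w : ℂ, 1 ≤ ‖w‖ →
      C⁻¹ * (‖w‖ ^ t * (1 + Real.log (‖w / l‖) ^ 2) ^ (1 / 2 - t)) ≤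
        ((1 + ‖w‖ ^ 2) / ‖w‖) ^ t *
          ∑' z : {z : ℂ // l * Complex.exp z = w}, (1 + ‖z.1‖ ^ 2) ^ (-t) ∧
      ((1 + ‖w‖ ^ 2) / ‖w‖) ^ t *
          ∑' z : {z : ℂ // l * Complex.exp z = w}, (1 + ‖z.1‖ ^ 2) ^ (-t) ≤
        C * (‖w‖ ^ t * (1 + Real.log (‖w / l‖) ^ 2) ^ (1 / 2 - t)) := by
  have ht0 : (0:ℝ) < t := by linarith
  obtain ⟨C₀, hC₀, hC⟩ := int_sum_est t ht
  have h2t1 : (1:ℝ) ≤ 2 ^ t := by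
    have := Real.rpow_le_rpow_of_exponent_le (one_le_two) ht0.le
    simpa using this
  have h2t0 : (0:ℝ) < 2 ^ t := Real.rpow_pos_of_pos two_pos _
  refine ⟨C₀ * 2 ^ t, by positivity, ?_⟩
  intro w hw
  have haw0 : (0:ℝ) < ‖w‖ := by linarith
  have hw0 : w ≠ 0 := by
    intro h; rw [h] at hw; simp at hw; linarith
  set x : ℝ := Real.log (‖w/l‖) with hxdef
  have hA : (1:ℝ) ≤ 1 + x^2 := by nlinarith [sq_nonneg x]
  obtain ⟨hSsumm, hSlow, hShigh⟩ :=
    hC (1 + x^2) (Complex.arg (w/l)) hA (Complex.abs_arg_le_pi (w/l))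
  have hts := preimage_tsum l hl t w hw0
  rw [← hxdef] at hts
  set S : ℝ := ∑' n : ℤ, ((1 + x^2) + (Complex.arg (w/l) + 2*π*(n:ℝ))^2) ^ (-t) with hSdef
  have hS0 : 0 ≤ S := tsum_nonneg (fun n => Real.rpow_nonneg (by positivity) _)
  set P : ℝ := (1 + x^2) ^ ((1:ℝ)/2 - t) with hPdef
  have hP0 : 0 < P := Real.rpow_pos_of_pos (by positivity) _
  set aw : ℝ := ‖w‖ with hawdef
  have hawt : 0 < aw ^ t := Real.rpow_pos_of_pos haw0 _
  have hF1 : aw ^ t ≤ ((1 + aw^2)/aw) ^ t := by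
    apply Real.rpow_le_rpow haw0.le _ ht0.le
    rw [le_div_iff₀ haw0]
    nlinarith
  have hF2 : ((1 + aw^2)/aw) ^ t ≤ 2 ^ t * aw ^ t := by
    rw [← Real.mul_rpow (by norm_num) haw0.le]
    apply Real.rpow_le_rpow (by positivity) _ ht0.le
    rw [div_le_iff₀ haw0]
    nlinarith
  have hF0 : 0 < ((1 + aw^2)/aw) ^ t := Real.rpow_pos_of_pos (by positivity) _
  have hSlow' : C₀⁻¹ * P ≤ S := hSlow
  have hShigh' : S ≤ C₀ * P := hShigh
  rw [hts]
  constructor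
  · calc (C₀ * 2 ^ t)⁻¹ * (aw ^ t * P)
        ≤ C₀⁻¹ * (aw ^ t * P) := by
          apply mul_le_mul_of_nonneg_right _ (by positivity)
          apply inv_anti₀ hC₀
          nlinarith
      _ = aw ^ t * (C₀⁻¹ * P) := by ring
      _ ≤ ((1 + aw^2)/aw) ^ t * S :=
          mul_le_mul hF1 hSlow' (by positivity) hF0.le
  · calc ((1 + aw^2)/aw) ^ t * S
        ≤ (2 ^ t * aw ^ t) * (C₀ * P) :=
          mul_le_mul hF2 hShigh' hS0 (by positivity)
      _ = (C₀ * 2 ^ t) * (aw ^ t * P) := by ring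

lemma phi_tendsto (c C t : ℝ) (hc : 0 < c) (hC : 0 < C) (ht : (1/2:ℝ) < t) :
    Tendsto (fun r : ℝ => C⁻¹ * (r ^ t * (1 + Real.log (r/c) ^ 2) ^ ((1:ℝ)/2 - t)))
      atTop atTop := by
  have ht0 : (0:ℝ) < t := by linarith
  have hp : (0:ℝ) < 2*t-1 := by linarith
  set b : ℝ := t/(2*(2*t-1)) with hbdef
  have hb0 : 0 < b := by positivity
  have hD : (0:ℝ) < C⁻¹ * (4:ℝ) ^ (1-2*t) := by positivity
  have hbound : ∀ᶠ r : ℝ in atTop,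
      C⁻¹ * (4:ℝ) ^ (1-2*t) * r ^ (t/2) ≤
        C⁻¹ * (r ^ t * (1 + Real.log (r/c) ^ 2) ^ ((1:ℝ)/2 - t)) := by
    have hlog : ∀ᶠ r : ℝ in atTop, Real.log r ≤ r ^ b := by
      filter_upwards [(isLittleO_log_rpow_atTop hb0).bound one_pos,
        eventually_ge_atTop (1:ℝ)] with r h h1
      have : |Real.log r| ≤ |r ^ b| := by simpa using h
      have h2 : |r ^ b| = r ^ b := abs_of_nonneg (Real.rpow_nonneg (by linarith) b)
      calc Real.log r ≤ |Real.log r| := le_abs_self _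
        _ ≤ r ^ b := by rw [← h2]; exact this
    have hE2 : ∀ᶠ r : ℝ in atTop, 1 ≤ Real.log (r/c) := by
      have h := Real.tendsto_log_atTop.comp (tendsto_id.atTop_div_const hc)
      exact h.eventually_ge_atTop 1
    have hE3 : ∀ᶠ r : ℝ in atTop, |Real.log c| ≤ Real.log r :=
      Real.tendsto_log_atTop.eventually_ge_atTop _
    filter_upwards [hlog, hE2, hE3, eventually_ge_atTop (1:ℝ)] with r hlogr hL1 hLc hr1
    have hr0 : (0:ℝ) < r := by linarith
    set L : ℝ := Real.log (r/c) with hLdef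
    have hlr0 : 0 ≤ Real.log r := le_trans (abs_nonneg _) hLc
    have hLr : L ≤ 2 * Real.log r := by
      rw [hLdef, Real.log_div (by linarith) hc.ne']
      have := neg_abs_le (Real.log c)
      linarith
    have hrb0 : 0 ≤ r ^ b := Real.rpow_nonneg hr0.le b
    have h1 : 1 + L^2 ≤ (4 * r ^ b)^2 := by
      have hsq : (Real.log r)^2 ≤ (r ^ b)^2 := pow_le_pow_left₀ hlr0 hlogr 2
      nlinarith
    have h2 : ((4 * r ^ b)^2) ^ ((1:ℝ)/2 - t) ≤ (1 + L^2) ^ ((1:ℝ)/2 - t) :=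
      Real.rpow_le_rpow_of_nonpos (by positivity) h1 (by linarith)
    have h3 : ((4 * r ^ b)^2) ^ ((1:ℝ)/2 - t) = (4:ℝ) ^ (1-2*t) * r ^ (-(t/2)) := by
      rw [← Real.rpow_natCast (4 * r ^ b) 2, ← Real.rpow_mul (by positivity)]
      rw [Real.mul_rpow (by norm_num) hrb0, ← Real.rpow_mul hr0.le]
      congr 2
      · push_cast; ring
      · rw [hbdef]; push_cast; rw [div_mul_eq_mul_div, div_eq_iff (mul_ne_zero two_ne_zero hp.ne')]; ring
    have h4 : r ^ t * r ^ (-(t/2)) = r ^ (t/2) := by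
      rw [← Real.rpow_add hr0]; congr 1; ring
    calc C⁻¹ * (4:ℝ) ^ (1-2*t) * r ^ (t/2)
        = C⁻¹ * (r ^ t * ((4:ℝ) ^ (1-2*t) * r ^ (-(t/2)))) := by
          rw [show r ^ t * ((4:ℝ) ^ (1-2*t) * r ^ (-(t/2)))
              = (4:ℝ) ^ (1-2*t) * (r ^ t * r ^ (-(t/2))) by ring, h4]
          ring
      _ = C⁻¹ * (r ^ t * (((4 * r ^ b)^2) ^ ((1:ℝ)/2 - t))) := by rw [h3]
      _ ≤ C⁻¹ * (r ^ t * (1 + L^2) ^ ((1:ℝ)/2 - t)) := by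
          apply mul_le_mul_of_nonneg_left _ (by positivity)
          apply mul_le_mul_of_nonneg_left h2 (Real.rpow_nonneg hr0.le t)
  apply tendsto_atTop_mono' atTop hbound
  exact (tendsto_rpow_atTop (by linarith : (0:ℝ) < t/2)).const_mul_atTop hD

end StmtAux

/-- For `f(z) = λ·e^z`, `λ ≠ 0`, and `t > 1/2`, the spherical transfer operator
applied to the constant function `1`, namely
`L_t 1(w) = ((1+|w|²)/|w|)^t · ∑_{f(z)=w} (1+|z|²)^{-t}`, tends to `+∞` as `|w| → ∞`
(so `L_t` is not a bounded operator), and more precisely for large `|w|` one has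
`L_t 1(w) ≍ |w|^t · (1 + (log|w/λ|)²)^{1/2 - t}`. -/
theorem stmt2 (l : ℂ) (hl : l ≠ 0) (t : ℝ) (ht : (1 / 2 : ℝ) < t) :
    Tendsto
      (fun w : ℂ => ((1 + ‖w‖ ^ 2) / ‖w‖) ^ t *
        ∑' z : {z : ℂ // l * Complex.exp z = w}, (1 + ‖z.1‖ ^ 2) ^ (-t))
      (comap (fun w : ℂ => ‖w‖) atTop) atTop ∧
    ¬ BddAbove (Set.range (fun w : ℂ => ((1 + ‖w‖ ^ 2) / ‖w‖) ^ t *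
        ∑' z : {z : ℂ // l * Complex.exp z = w}, (1 + ‖z.1‖ ^ 2) ^ (-t))) ∧
    ∃ C > 0, ∃ R : ℝ, ∀ w : ℂ, R ≤ ‖w‖ →
      C⁻¹ * (‖w‖ ^ t * (1 + Real.log (‖w / l‖) ^ 2) ^ (1 / 2 - t)) ≤
        ((1 + ‖w‖ ^ 2) / ‖w‖) ^ t *
          ∑' z : {z : ℂ // l * Complex.exp z = w}, (1 + ‖z.1‖ ^ 2) ^ (-t) ∧
      ((1 + ‖w‖ ^ 2) / ‖w‖) ^ t *
          ∑' z : {z : ℂ // l * Complex.exp z = w}, (1 + ‖z.1‖ ^ 2) ^ (-t) ≤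
        C * (‖w‖ ^ t * (1 + Real.log (‖w / l‖) ^ 2) ^ (1 / 2 - t)) := by
  obtain ⟨C, hC, hmain⟩ := main_est l hl t ht
  have hl0 : 0 < ‖l‖ := by
    simpa [norm_pos_iff] using hl
  have habs : Tendsto (fun w : ℂ => ‖w‖) (comap (fun w : ℂ => ‖w‖) atTop) atTop := tendsto_comap
  have hphi := phi_tendsto (‖l‖) C t hl0 hC ht
  have htend : Tendsto
      (fun w : ℂ => ((1 + ‖w‖ ^ 2) / ‖w‖) ^ t *
        ∑' z : {z : ℂ // l * Complex.exp z = w}, (1 + ‖z.1‖ ^ 2) ^ (-t))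
      (comap (fun w : ℂ => ‖w‖) atTop) atTop := by
    apply tendsto_atTop_mono' _ _ (hphi.comp habs)
    filter_upwards [habs.eventually_ge_atTop 1] with w hw
    have h := (hmain w hw).1
    have e : ‖w / l‖ = ‖w‖ / ‖l‖ := norm_div _ _
    simp only [Function.comp]
    rw [← e]
    exact h
  have hmapneb : Tendsto (fun r : ℝ => (r:ℂ)) atTop (comap (fun w : ℂ => ‖w‖) atTop) := by
    rw [tendsto_comap_iff]
    have : ((fun w : ℂ => ‖w‖) ∘ fun r : ℝ => (r:ℂ)) = fun r : ℝ => |r| := by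
      funext r; simp [Function.comp]
    rw [this]
    exact tendsto_abs_atTop_atTop
  have hneb : (comap (fun w : ℂ => ‖w‖) atTop : Filter ℂ).NeBot := neBot_of_le hmapneb
  refine ⟨htend, ?_, C, hC, 1, fun w hw => hmain w hw⟩
  rintro ⟨M, hM⟩
  obtain ⟨w, hw⟩ := (htend.eventually_ge_atTop (M+1)).exists
  have := hM (Set.mem_range_self w)
  linarith
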